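/- The family of vector fields on ℝ³ given by L_n = e^{−nt} ∂_t + n e^{−nt} ∂_x + ((n³−n)/6)·e^{−nt−2x} ∂_u (n ∈ ℤ) is a realization of the Witt algebra: [L_m, L_n] = (m−n)L_{m+n} for all m, n ∈ ℤ. (This is the realization 𝔚₁₀ of Theorem 1; note that (sgn(n)/2)·Σ_{j=1}^{|n|} j(j−1) = (n³−n)/6.) -/

import Mathlib

/-- Lie bracket of smooth vector fields on `ℝ³` (coordinates `(t,x,u)`), identified with
`C^∞` maps `ℝ³ → ℝ³`: `[X,Y](p) = (DY)(p)(X(p)) - (DX)(p)(Y(p))`. -/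
noncomputable def lieBracket3 (X Y : ℝ × ℝ × ℝ → ℝ × ℝ × ℝ) : ℝ × ℝ × ℝ → ℝ × ℝ × ℝ :=
  fun p => fderiv ℝ Y p (X p) - fderiv ℝ X p (Y p)

/-- The realization `𝔚₁₀`:
`L_n = e^{-nt} ∂_t + n e^{-nt} ∂_x + ((n³-n)/6)·e^{-nt-2x} ∂_u`. -/
noncomputable def W10field (n : ℤ) : ℝ × ℝ × ℝ → ℝ × ℝ × ℝ := fun p =>
  (Real.exp (-(n : ℝ) * p.1),
   (n : ℝ) * Real.exp (-(n : ℝ) * p.1),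
   (((n : ℝ) ^ 3 - (n : ℝ)) / 6) * Real.exp (-(n : ℝ) * p.1 - 2 * p.2.1))


noncomputable def fstL : (ℝ × ℝ × ℝ) →L[ℝ] ℝ := ContinuousLinearMap.fst ℝ ℝ (ℝ × ℝ)
noncomputable def sndL : (ℝ × ℝ × ℝ) →L[ℝ] ℝ :=
  (ContinuousLinearMap.fst ℝ ℝ ℝ).comp (ContinuousLinearMap.snd ℝ ℝ (ℝ × ℝ))

noncomputable def W10deriv (n : ℤ) (p : ℝ × ℝ × ℝ) : (ℝ × ℝ × ℝ) →L[ℝ] (ℝ × ℝ × ℝ) :=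
  ((Real.exp (-(n:ℝ) * p.1)) • ((-(n:ℝ)) • fstL)).prod
    ((((n:ℝ)) • ((Real.exp (-(n:ℝ) * p.1)) • ((-(n:ℝ)) • fstL))).prod
      ((((n:ℝ)^3 - (n:ℝ))/6) • ((Real.exp (-(n:ℝ)*p.1 - 2*p.2.1)) •
        (((-(n:ℝ)) • fstL) - ((2:ℝ) • sndL)))))

lemma W10_hasFDerivAt (n : ℤ) (p : ℝ × ℝ × ℝ) :
    HasFDerivAt (W10field n) (W10deriv n p) p := by
  have h1 : HasFDerivAt (fun q : ℝ × ℝ × ℝ => -(n:ℝ) * q.1) ((-(n:ℝ)) • fstL) p := by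
    exact (hasFDerivAt_fst (𝕜 := ℝ) (p := p)).const_mul (-(n:ℝ))
  have he : HasFDerivAt (fun q : ℝ × ℝ × ℝ => Real.exp (-(n:ℝ) * q.1))
      ((Real.exp (-(n:ℝ) * p.1)) • ((-(n:ℝ)) • fstL)) p := h1.exp
  have h2 : HasFDerivAt (fun q : ℝ × ℝ × ℝ => -(n:ℝ) * q.1 - 2 * q.2.1)
      (((-(n:ℝ)) • fstL) - ((2:ℝ) • sndL)) p := by
    have hx : HasFDerivAt (fun q : ℝ × ℝ × ℝ => q.2.1) sndL p :=
      (hasFDerivAt_fst (p := p.2)).comp p (hasFDerivAt_snd (p := p))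
    exact h1.sub (hx.const_mul (2:ℝ))
  exact he.prodMk ((he.const_mul ((n:ℝ))).prodMk (h2.exp.const_mul _))

/-- The family `(W10field n)` is a realization of the Witt algebra on `ℝ³`:
`[L_m, L_n] = (m - n) L_{m+n}` for all `m, n ∈ ℤ`. -/
theorem W10_realization :
    ∀ m n : ℤ, lieBracket3 (W10field m) (W10field n)
      = fun p => ((m : ℝ) - (n : ℝ)) • W10field (m + n) p := by
  intro m n
  funext p
  have hm := (W10_hasFDerivAt m p).fderiv
  have hn := (W10_hasFDerivAt n p).fderiv
  simp only [lieBracket3, hm, hn]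
  ext <;>
  · simp [W10deriv, W10field, fstL, sndL, Prod.smul_def, smul_eq_mul, Int.cast_add]
    ring_nf
    simp [Real.exp_sub, Real.exp_add, Real.exp_neg]
    try field_simp
    try ring
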